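/- arXiv:2103.11546 — 2 statements merged into one kernel-verified Lean document; each statement's English description precedes it below -/
import Mathlib

section
/- Let F : Ω → ℝ and v : Ω × X → ℝ be such that all quantities below are integrable. Then E_π[F δ_σ(v)] = E_π[⟨DF, v⟩_{L²(X,σ)}] = E_π[∫_X D_xF(ω) v(x,ω) σ(dx)], and E_π[F δ_ω(v)] = E_π[⟨DF, v⟩_{L²(X,ω)}] = E_π[∫_X D_xF(ω) v(x,ω) ω(dx)]; i.e. δ_σ and δ_ω are the adjoints of the finite difference gradient D with respect to the scalar products given by σ and by ω respectively. -/
open MeasureTheory ENNReal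

namespace ConfigSpace

variable {X : Type*} [DecidableEq X] [MeasurableSpace X] [MeasurableSpace (Finset X)]

/-- The point measure `ω = Σ_{x ∈ ω} δ_x` associated with a finite configuration
`ω`, viewed as a measure on `X`. -/
noncomputable def pt (ω : Finset X) : Measure X := ∑ x ∈ ω, Measure.dirac x

/-- The finite difference gradient
`D_x F(ω) = (F(ω) - F(ω+δ_x))·1_{x ∉ ω} + (F(ω) - F(ω-δ_x))·1_{x ∈ ω}`. -/
def D (F : Finset X → ℝ) (x : X) (ω : Finset X) : ℝ :=
  if x ∈ ω then F ω - F (ω.erase x) else F ω - F (insert x ω)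

/-- `D⁺_x F = max(0, D_x F)`. -/
def Dp (F : Finset X → ℝ) (x : X) (ω : Finset X) : ℝ := max (D F x ω) 0

/-- `D⁻_x F = -min(0, D_x F)`. -/
def Dm (F : Finset X → ℝ) (x : X) (ω : Finset X) : ℝ := -(min (D F x ω) 0)

/-- Indicator function `1_A` of a set of configurations. -/
noncomputable def ind (A : Set (Finset X)) : Finset X → ℝ := A.indicator fun _ => 1

/-- The configuration σ-algebra on `Finset X` makes the basic operations
(addition of a point, removal of a point, membership) measurable. -/
def GoodAlgebra (X : Type*) [DecidableEq X] [MeasurableSpace X]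
    [MeasurableSpace (Finset X)] : Prop :=
  Measurable (fun p : X × Finset X => insert p.1 p.2) ∧
  Measurable (fun p : X × Finset X => p.2.erase p.1) ∧
  MeasurableSet {p : X × Finset X | p.1 ∈ p.2}

/-- `π` is the Poisson measure with intensity `σ` on the configuration space `Ω`
of a.s. finite simple configurations of `X` (identified with `Finset X`):
it is a probability measure satisfying the Mecke identity, which characterizes
the Poisson measure with intensity `σ`. -/
def IsPoisson (σ : Measure X) (π : Measure (Finset X)) : Prop :=
  GoodAlgebra X ∧ IsProbabilityMeasure π ∧
    ∀ u : X → Finset X → ℝ≥0∞, Measurable (Function.uncurry u) →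
      ∫⁻ ω, ∑ x ∈ ω, u x ω ∂π = ∫⁻ ω, ∫⁻ x, u x (insert x ω) ∂σ ∂π


/-- `δ_σ(u)(ω) = ∫_X u(x,ω) σ(dx) − ∫_X u(x, ω−δ_x) ω(dx)`. -/
noncomputable def deltaSigma (σ : Measure X) (u : X → Finset X → ℝ) (ω : Finset X) : ℝ :=
  (∫ x, u x ω ∂σ) - ∑ x ∈ ω, u x (ω.erase x)

/-- `δ_ω(u)(ω) = ∫_X u(x,ω) ω(dx) − ∫_X u(x, ω+δ_x) σ(dx)`. -/
noncomputable def deltaOmega (σ : Measure X) (u : X → Finset X → ℝ) (ω : Finset X) : ℝ :=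
  (∑ x ∈ ω, u x ω) - ∫ x, u x (insert x ω) ∂σ

/- ### Auxiliary lemmas -/

private lemma max_sub_max (t : ℝ) : max t 0 - max (-t) 0 = t := by
  rcases le_total t 0 with h | h
  · rw [max_eq_right h, max_eq_left (neg_nonneg.mpr h)]; ring
  · rw [max_eq_left h, max_eq_right (neg_nonpos.mpr h)]; ring

private lemma ofReal_eq_ofReal_max (t : ℝ) :
    ENNReal.ofReal t = ENNReal.ofReal (max t 0) := by
  rcases le_total t 0 with h | h
  · rw [max_eq_right h, ENNReal.ofReal_eq_zero.mpr h, ENNReal.ofReal_zero]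
  · rw [max_eq_left h]

private lemma ofReal_sum_balance {ι : Type*} (s : Finset ι) (a : ι → ℝ) :
    ENNReal.ofReal (∑ x ∈ s, a x) + ∑ x ∈ s, ENNReal.ofReal (-a x) =
      ENNReal.ofReal (-∑ x ∈ s, a x) + ∑ x ∈ s, ENNReal.ofReal (a x) := by
  have e1 : ∑ x ∈ s, ENNReal.ofReal (-a x) = ENNReal.ofReal (∑ x ∈ s, max (-a x) 0) := by
    rw [ENNReal.ofReal_sum_of_nonneg (fun i _ => le_max_right _ _)]
    exact Finset.sum_congr rfl fun i _ => ofReal_eq_ofReal_max _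
  have e2 : ∑ x ∈ s, ENNReal.ofReal (a x) = ENNReal.ofReal (∑ x ∈ s, max (a x) 0) := by
    rw [ENNReal.ofReal_sum_of_nonneg (fun i _ => le_max_right _ _)]
    exact Finset.sum_congr rfl fun i _ => ofReal_eq_ofReal_max _
  rw [e1, e2, ofReal_eq_ofReal_max (∑ x ∈ s, a x), ofReal_eq_ofReal_max (-∑ x ∈ s, a x),
    ← ENNReal.ofReal_add (le_max_right _ _) (Finset.sum_nonneg fun i _ => le_max_right _ _),
    ← ENNReal.ofReal_add (le_max_right _ _) (Finset.sum_nonneg fun i _ => le_max_right _ _)]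
  congr 1
  have hAB : ∑ x ∈ s, (max (a x) 0 - max (-a x) 0) = ∑ x ∈ s, a x :=
    Finset.sum_congr rfl fun i _ => max_sub_max _
  rw [Finset.sum_sub_distrib] at hAB
  have hs := max_sub_max (∑ x ∈ s, a x)
  linarith

/-- The Mecke identity for real-valued integrands. -/
private lemma mecke_real (σ : Measure X) [IsFiniteMeasure σ] (π : Measure (Finset X))
    (hπ : IsPoisson σ π) (u : X → Finset X → ℝ)
    (hu : Measurable (Function.uncurry u))
    (hsum : Integrable (fun ω => ∑ x ∈ ω, u x ω) π)
    (hprod : Integrable (fun p : Finset X × X => u p.2 (insert p.2 p.1)) (π.prod σ)) :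
    ∫ ω, ∑ x ∈ ω, u x ω ∂π = ∫ p, u p.2 (insert p.2 p.1) ∂(π.prod σ) := by
  obtain ⟨⟨hins, hers, hmem⟩, hprob, mecke⟩ := hπ
  haveI := hprob
  set w : Finset X × X → ℝ := fun p => u p.2 (insert p.2 p.1) with hw
  have hwm : Measurable w := hu.comp (measurable_snd.prodMk (hins.comp measurable_swap))
  have key1 : ∫⁻ ω, ∑ x ∈ ω, ENNReal.ofReal (u x ω) ∂π
      = ∫⁻ p, ENNReal.ofReal (w p) ∂(π.prod σ) := by
    calc ∫⁻ ω, ∑ x ∈ ω, ENNReal.ofReal (u x ω) ∂π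
        = ∫⁻ ω, ∫⁻ x, ENNReal.ofReal (u x (insert x ω)) ∂σ ∂π :=
          mecke (fun x ω => ENNReal.ofReal (u x ω)) (ENNReal.measurable_ofReal.comp hu)
      _ = ∫⁻ p, ENNReal.ofReal (w p) ∂(π.prod σ) :=
          (lintegral_prod _ (ENNReal.measurable_ofReal.comp hwm).aemeasurable).symm
  have key2 : ∫⁻ ω, ∑ x ∈ ω, ENNReal.ofReal (-u x ω) ∂π
      = ∫⁻ p, ENNReal.ofReal (-w p) ∂(π.prod σ) := by
    calc ∫⁻ ω, ∑ x ∈ ω, ENNReal.ofReal (-u x ω) ∂π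
        = ∫⁻ ω, ∫⁻ x, ENNReal.ofReal (-u x (insert x ω)) ∂σ ∂π :=
          mecke (fun x ω => ENNReal.ofReal (-u x ω)) (ENNReal.measurable_ofReal.comp hu.neg)
      _ = ∫⁻ p, ENNReal.ofReal (-w p) ∂(π.prod σ) :=
          (lintegral_prod _ (ENNReal.measurable_ofReal.comp hwm.neg).aemeasurable).symm
  have finC1 : ∫⁻ p, ENNReal.ofReal (w p) ∂(π.prod σ) ≠ ⊤ := hprod.lintegral_lt_top.ne
  have finC2 : ∫⁻ p, ENNReal.ofReal (-w p) ∂(π.prod σ) ≠ ⊤ := by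
    have : Integrable (fun p => -w p) (π.prod σ) := hprod.neg
    exact this.lintegral_lt_top.ne
  have finA1 : ∫⁻ ω, ENNReal.ofReal (∑ x ∈ ω, u x ω) ∂π ≠ ⊤ := hsum.lintegral_lt_top.ne
  have finA2 : ∫⁻ ω, ENNReal.ofReal (-∑ x ∈ ω, u x ω) ∂π ≠ ⊤ := by
    have : Integrable (fun ω => -∑ x ∈ ω, u x ω) π := hsum.neg
    exact this.lintegral_lt_top.ne
  have hfaem1 : AEMeasurable (fun ω => ENNReal.ofReal (∑ x ∈ ω, u x ω)) π :=
    ENNReal.measurable_ofReal.comp_aemeasurable hsum.aemeasurable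
  have hfaem2 : AEMeasurable (fun ω => ENNReal.ofReal (-∑ x ∈ ω, u x ω)) π :=
    ENNReal.measurable_ofReal.comp_aemeasurable hsum.aemeasurable.neg
  have balance :
      (∫⁻ ω, ENNReal.ofReal (∑ x ∈ ω, u x ω) ∂π) + ∫⁻ ω, ∑ x ∈ ω, ENNReal.ofReal (-u x ω) ∂π
        = (∫⁻ ω, ENNReal.ofReal (-∑ x ∈ ω, u x ω) ∂π)
            + ∫⁻ ω, ∑ x ∈ ω, ENNReal.ofReal (u x ω) ∂π := by
    rw [← lintegral_add_left' hfaem1, ← lintegral_add_left' hfaem2]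
    exact lintegral_congr fun ω => ofReal_sum_balance ω (fun x => u x ω)
  rw [key1, key2] at balance
  have hbal := congrArg ENNReal.toReal balance
  rw [ENNReal.toReal_add finA1 finC2, ENNReal.toReal_add finA2 finC1] at hbal
  rw [integral_eq_lintegral_pos_part_sub_lintegral_neg_part hsum,
    integral_eq_lintegral_pos_part_sub_lintegral_neg_part hprod]
  linarith

private lemma ae_not_mem_prod (σ : Measure X) [IsFiniteMeasure σ] [NullSingletonClass σ]
    (π : Measure (Finset X))
    (hmem : MeasurableSet {p : X × Finset X | p.1 ∈ p.2}) :
    ∀ᵐ p ∂(π.prod σ), p.2 ∉ p.1 := by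
  have hS : MeasurableSet {p : Finset X × X | p.2 ∈ p.1} := measurable_swap hmem
  rw [ae_iff]
  have hset : {p : Finset X × X | ¬p.2 ∉ p.1} = {p : Finset X × X | p.2 ∈ p.1} := by
    ext p; simp
  rw [hset, Measure.prod_apply hS]
  have h0 : ∀ ω : Finset X, σ (↑ω : Set X) = 0 :=
    fun ω => Set.Countable.measure_zero ω.countable_toSet σ
  simp [h0]

private lemma ae_not_mem (σ : Measure X) [NullSingletonClass σ] (ω : Finset X) :
    ∀ᵐ x ∂σ, x ∉ ω :=
  measure_eq_zero_iff_ae_notMem.mp (Set.Countable.measure_zero ω.countable_toSet σ)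

/-- Proposition 2.2: the operators `δ_σ` and `δ_ω` are the adjoints
of the finite difference gradient `D` under the Poisson measure `π`, with respect to
the scalar products of `L²(X,σ)` and `L²(X,ω)` respectively:
`E[F δ_σ(v)] = E[⟨DF, v⟩_{L²(σ)}]` and `E[F δ_ω(v)] = E[⟨DF, v⟩_{L²(ω)}]`,
provided the corresponding quantities are integrable. -/
theorem adjointness_of_delta
    [MetricSpace X] [BorelSpace X]
    (σ : Measure X) [IsFiniteMeasure σ] [NullSingletonClass σ]
    (π : Measure (Finset X)) (hπ : IsPoisson σ π)
    (F : Finset X → ℝ) (v : X → Finset X → ℝ)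
    (hF : Measurable F) (hv : Measurable (Function.uncurry v))
    (h1 : Integrable (fun p : Finset X × X => F p.1 * v p.2 p.1) (π.prod σ))
    (h2 : Integrable (fun p : Finset X × X => F (insert p.2 p.1) * v p.2 p.1) (π.prod σ))
    (h3 : Integrable (fun p : Finset X × X => F p.1 * v p.2 (insert p.2 p.1)) (π.prod σ))
    (h4 : Integrable (fun ω => ∑ x ∈ ω, F ω * v x (ω.erase x)) π)
    (h5 : Integrable (fun ω => ∑ x ∈ ω, F (ω.erase x) * v x (ω.erase x)) π)
    (h6 : Integrable (fun ω => ∑ x ∈ ω, F ω * v x ω) π)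
    (h7 : Integrable (fun ω => ∑ x ∈ ω, F (ω.erase x) * v x ω) π) :
    (∫ ω, F ω * deltaSigma σ v ω ∂π = ∫ ω, ∫ x, D F x ω * v x ω ∂σ ∂π) ∧
    (∫ ω, F ω * deltaOmega σ v ω ∂π = ∫ ω, ∑ x ∈ ω, D F x ω * v x ω ∂π) := by
  have hins := hπ.1.1
  have hers := hπ.1.2.1
  have hmem := hπ.1.2.2
  haveI := hπ.2.1
  have hnull : ∀ᵐ p ∂(π.prod σ), p.2 ∉ p.1 := ae_not_mem_prod σ π hmem
  -- Mecke for u x ω = F ω * v x (ω.erase x)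
  have hu1 : Measurable (Function.uncurry fun x ω => F ω * v x (ω.erase x)) :=
    (hF.comp measurable_snd).mul (hv.comp (measurable_fst.prodMk hers))
  have hp1 : Integrable
      (fun p : Finset X × X => F (insert p.2 p.1) * v p.2 ((insert p.2 p.1).erase p.2))
      (π.prod σ) :=
    h2.congr (hnull.mono fun p hp => by simp [Finset.erase_insert hp])
  have mecke1 := mecke_real σ π hπ (fun x ω => F ω * v x (ω.erase x)) hu1 h4 hp1
  have e1 : ∫ ω, ∑ x ∈ ω, F ω * v x (ω.erase x) ∂π
      = ∫ p, F (insert p.2 p.1) * v p.2 p.1 ∂(π.prod σ) :=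
    mecke1.trans (integral_congr_ae (hnull.mono fun p hp => by simp [Finset.erase_insert hp]))
  -- Mecke for u x ω = F (ω.erase x) * v x ω
  have hu2 : Measurable (Function.uncurry fun x ω => F (ω.erase x) * v x ω) :=
    (hF.comp hers).mul hv
  have hp2 : Integrable
      (fun p : Finset X × X => F ((insert p.2 p.1).erase p.2) * v p.2 (insert p.2 p.1))
      (π.prod σ) :=
    h3.congr (hnull.mono fun p hp => by simp [Finset.erase_insert hp])
  have mecke2 := mecke_real σ π hπ (fun x ω => F (ω.erase x) * v x ω) hu2 h7 hp2
  have e2 : ∫ ω, ∑ x ∈ ω, F (ω.erase x) * v x ω ∂π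
      = ∫ p, F p.1 * v p.2 (insert p.2 p.1) ∂(π.prod σ) :=
    mecke2.trans (integral_congr_ae (hnull.mono fun p hp => by simp [Finset.erase_insert hp]))
  constructor
  · -- σ-adjointness
    have step : ∫ ω, F ω * deltaSigma σ v ω ∂π
        = ∫ ω, ((∫ x, F ω * v x ω ∂σ) - ∑ x ∈ ω, F ω * v x (ω.erase x)) ∂π :=
      integral_congr_ae (Filter.Eventually.of_forall fun ω => by
        simp only [deltaSigma, mul_sub, Finset.mul_sum, integral_const_mul])
    have hInt1 : Integrable (fun ω => ∫ x, F ω * v x ω ∂σ) π := h1.integral_prod_left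
    have eP1 : ∫ p, F p.1 * v p.2 p.1 ∂(π.prod σ) = ∫ ω, ∫ x, F ω * v x ω ∂σ ∂π :=
      integral_prod _ h1
    have hDae : ∀ ω : Finset X, ∫ x, D F x ω * v x ω ∂σ
        = ∫ x, (F ω * v x ω - F (insert x ω) * v x ω) ∂σ := fun ω =>
      integral_congr_ae ((ae_not_mem σ ω).mono fun x hx => by
        simp only [D, if_neg hx, sub_mul])
    have eRHS : ∫ ω, ∫ x, D F x ω * v x ω ∂σ ∂π
        = ∫ ω, ∫ x, (F ω * v x ω - F (insert x ω) * v x ω) ∂σ ∂π :=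
      integral_congr_ae (Filter.Eventually.of_forall fun ω => hDae ω)
    have eP2 : ∫ p, (F p.1 * v p.2 p.1 - F (insert p.2 p.1) * v p.2 p.1) ∂(π.prod σ)
        = ∫ ω, ∫ x, (F ω * v x ω - F (insert x ω) * v x ω) ∂σ ∂π :=
      integral_prod _ (h1.sub h2)
    have eP3 : ∫ p, (F p.1 * v p.2 p.1 - F (insert p.2 p.1) * v p.2 p.1) ∂(π.prod σ)
        = ∫ p, F p.1 * v p.2 p.1 ∂(π.prod σ)
          - ∫ p, F (insert p.2 p.1) * v p.2 p.1 ∂(π.prod σ) :=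
      integral_sub h1 h2
    rw [step, integral_sub hInt1 h4, e1, eRHS, ← eP2, eP3, ← eP1]
  · -- ω-adjointness
    have step2 : ∫ ω, F ω * deltaOmega σ v ω ∂π
        = ∫ ω, ((∑ x ∈ ω, F ω * v x ω) - ∫ x, F ω * v x (insert x ω) ∂σ) ∂π :=
      integral_congr_ae (Filter.Eventually.of_forall fun ω => by
        simp only [deltaOmega, mul_sub, Finset.mul_sum, integral_const_mul])
    have hInt3 : Integrable (fun ω => ∫ x, F ω * v x (insert x ω) ∂σ) π :=
      h3.integral_prod_left
    have eP4 : ∫ p, F p.1 * v p.2 (insert p.2 p.1) ∂(π.prod σ)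
        = ∫ ω, ∫ x, F ω * v x (insert x ω) ∂σ ∂π := integral_prod _ h3
    have hDsum : ∀ ω : Finset X, ∑ x ∈ ω, D F x ω * v x ω
        = (∑ x ∈ ω, F ω * v x ω) - ∑ x ∈ ω, F (ω.erase x) * v x ω := fun ω => by
      rw [← Finset.sum_sub_distrib]
      exact Finset.sum_congr rfl fun x hx => by simp only [D, if_pos hx, sub_mul]
    have eR : ∫ ω, ∑ x ∈ ω, D F x ω * v x ω ∂π
        = ∫ ω, ((∑ x ∈ ω, F ω * v x ω) - ∑ x ∈ ω, F (ω.erase x) * v x ω) ∂π :=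
      integral_congr_ae (Filter.Eventually.of_forall fun ω => hDsum ω)
    rw [step2, integral_sub h6 hInt3, eR, integral_sub h6 h7, e2, ← eP4]

end ConfigSpace
end

section
/- (L¹ co-area formula) For every F : Ω → ℝ with integrable quantities, E_π[∫_X D⁺_xF(ω) σ(dx)] = ∫_{−∞}^{∞} E_π[∫_X D⁺_x1_{{F>t}}(ω) σ(dx)] dt, and the same identity holds with D⁻ in place of D⁺, and with the measure ω(dx) in place of σ(dx). Consequently E_π[|D F|_{L¹((σ+ω)/2)}] = ∫_{−∞}^{∞} E_π[|D 1_{{F>t}}|_{L¹((σ+ω)/2)}] dt. -/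
open MeasureTheory ENNReal

set_option linter.unusedSectionVars false

namespace ConfigSpace

variable {X : Type*} [DecidableEq X] [MeasurableSpace X] [MeasurableSpace (Finset X)]

/-! ### Auxiliary machinery for the co-area formula -/

/-- Flip the point `x` in the configuration `ω`. -/
def flipc (x : X) (ω : Finset X) : Finset X :=
  if x ∈ ω then ω.erase x else insert x ω

lemma D_eq_flipc (G : Finset X → ℝ) (x : X) (ω : Finset X) :
    D G x ω = G ω - G (flipc x ω) := by
  unfold D flipc; split <;> rfl

lemma Dp_eq' (G : Finset X → ℝ) (x : X) (ω : Finset X) :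
    Dp G x ω = max (G ω - G (flipc x ω)) 0 := by
  rw [Dp, D_eq_flipc]

lemma Dm_eq' (G : Finset X → ℝ) (x : X) (ω : Finset X) :
    Dm G x ω = max (G (flipc x ω) - G ω) 0 := by
  rw [Dm, D_eq_flipc]
  rcases le_total (G ω - G (flipc x ω)) 0 with h' | h'
  · rw [min_eq_left h', max_eq_left (by linarith)]; ring
  · rw [min_eq_right h', max_eq_right (by linarith)]; ring

lemma ofReal_max_zero (c : ℝ) : ENNReal.ofReal (max c 0) = ENNReal.ofReal c := by
  rcases le_total c 0 with h | h
  · rw [max_eq_right h, ENNReal.ofReal_zero, Eq.comm, ENNReal.ofReal_eq_zero]; exact h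
  · rw [max_eq_left h]

lemma abs_split (c : ℝ) :
    ENNReal.ofReal |c| = ENNReal.ofReal (max c 0) + ENNReal.ofReal (max (-c) 0) := by
  rcases le_total c 0 with h | h
  · rw [abs_of_nonpos h, max_eq_right h, max_eq_left (by linarith), ENNReal.ofReal_zero, zero_add]
  · rw [abs_of_nonneg h, max_eq_left h, max_eq_right (by linarith), ENNReal.ofReal_zero, add_zero]

lemma abs_D_split (G : Finset X → ℝ) (x : X) (ω : Finset X) :
    ENNReal.ofReal |D G x ω| = ENNReal.ofReal (Dp G x ω) + ENNReal.ofReal (Dm G x ω) := by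
  rw [abs_split (D G x ω), Dp_eq', Dm_eq', D_eq_flipc]
  congr 2
  ring

lemma flipc_meas (hG : GoodAlgebra X) :
    Measurable (fun p : X × Finset X => flipc p.1 p.2) :=
  Measurable.ite hG.2.2 hG.2.1 hG.1

lemma D_meas (hGA : GoodAlgebra X) {G : Finset X → ℝ} (hG : Measurable G) :
    Measurable (fun p : X × Finset X => D G p.1 p.2) := by
  have h : (fun p : X × Finset X => D G p.1 p.2)
      = fun p => G p.2 - G (flipc p.1 p.2) := by
    funext p; exact D_eq_flipc G p.1 p.2
  rw [h]
  exact (hG.comp measurable_snd).sub (hG.comp (flipc_meas hGA))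

lemma Dp_meas (hGA : GoodAlgebra X) {G : Finset X → ℝ} (hG : Measurable G) :
    Measurable (fun p : X × Finset X => ENNReal.ofReal (Dp G p.1 p.2)) :=
  ENNReal.measurable_ofReal.comp ((D_meas hGA hG).max measurable_const)

lemma Dm_meas (hGA : GoodAlgebra X) {G : Finset X → ℝ} (hG : Measurable G) :
    Measurable (fun p : X × Finset X => ENNReal.ofReal (Dm G p.1 p.2)) :=
  ENNReal.measurable_ofReal.comp ((D_meas hGA hG).min measurable_const).neg

lemma absD_meas (hGA : GoodAlgebra X) {G : Finset X → ℝ} (hG : Measurable G) :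
    Measurable (fun p : X × Finset X => ENNReal.ofReal |D G p.1 p.2|) :=
  ENNReal.measurable_ofReal.comp (D_meas hGA hG).abs

/-- `chi F (t, ω) = 1_{t < F ω}`. -/
noncomputable def chi (F : Finset X → ℝ) : ℝ × Finset X → ℝ :=
  fun q => if q.1 < F q.2 then 1 else 0

lemma chi_meas {F : Finset X → ℝ} (hF : Measurable F) : Measurable (chi F) := by
  have h : MeasurableSet {q : ℝ × Finset X | q.1 < F q.2} :=
    measurableSet_lt measurable_fst (hF.comp measurable_snd)
  exact Measurable.ite h measurable_const measurable_const

lemma ind_eq (F : Finset X → ℝ) (t : ℝ) (ω : Finset X) :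
    ind {ω' | t < F ω'} ω = chi F (t, ω) := by
  simp [ind, chi, Set.indicator_apply, Set.mem_setOf_eq]

/-- The integrand for `D⁺` of the level indicator. -/
noncomputable def gp (F : Finset X → ℝ) : ℝ × X × Finset X → ℝ≥0∞ :=
  fun q => ENNReal.ofReal (max (chi F (q.1, q.2.2) - chi F (q.1, flipc q.2.1 q.2.2)) 0)

/-- The integrand for `D⁻` of the level indicator. -/
noncomputable def gm (F : Finset X → ℝ) : ℝ × X × Finset X → ℝ≥0∞ :=
  fun q => ENNReal.ofReal (max (chi F (q.1, flipc q.2.1 q.2.2) - chi F (q.1, q.2.2)) 0)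

lemma gp_meas (hGA : GoodAlgebra X) {F : Finset X → ℝ} (hF : Measurable F) :
    Measurable (gp F) := by
  have h1 : Measurable fun q : ℝ × X × Finset X => chi F (q.1, q.2.2) :=
    (chi_meas hF).comp (measurable_fst.prodMk (measurable_snd.snd))
  have h2 : Measurable fun q : ℝ × X × Finset X => chi F (q.1, flipc q.2.1 q.2.2) :=
    (chi_meas hF).comp (measurable_fst.prodMk ((flipc_meas hGA).comp measurable_snd))
  exact ENNReal.measurable_ofReal.comp ((h1.sub h2).max measurable_const)

lemma gm_meas (hGA : GoodAlgebra X) {F : Finset X → ℝ} (hF : Measurable F) :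
    Measurable (gm F) := by
  have h1 : Measurable fun q : ℝ × X × Finset X => chi F (q.1, q.2.2) :=
    (chi_meas hF).comp (measurable_fst.prodMk (measurable_snd.snd))
  have h2 : Measurable fun q : ℝ × X × Finset X => chi F (q.1, flipc q.2.1 q.2.2) :=
    (chi_meas hF).comp (measurable_fst.prodMk ((flipc_meas hGA).comp measurable_snd))
  exact ENNReal.measurable_ofReal.comp ((h2.sub h1).max measurable_const)

lemma gp_eq (F : Finset X → ℝ) (t : ℝ) (x : X) (ω : Finset X) :
    gp F (t, x, ω) = ENNReal.ofReal (Dp (ind {ω' | t < F ω'}) x ω) := by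
  rw [gp, Dp_eq', ind_eq, ind_eq]

lemma gm_eq (F : Finset X → ℝ) (t : ℝ) (x : X) (ω : Finset X) :
    gm F (t, x, ω) = ENNReal.ofReal (Dm (ind {ω' | t < F ω'}) x ω) := by
  rw [gm, Dm_eq', ind_eq, ind_eq]

lemma key (a b : ℝ) :
    ∫⁻ t : ℝ, ENNReal.ofReal
      (max ((if t < a then (1:ℝ) else 0) - (if t < b then (1:ℝ) else 0)) 0)
      = ENNReal.ofReal (max (a - b) 0) := by
  have h : ∀ t : ℝ, ENNReal.ofReal
      (max ((if t < a then (1:ℝ) else 0) - (if t < b then (1:ℝ) else 0)) 0)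
      = (Set.Ico b a).indicator (fun _ => (1:ℝ≥0∞)) t := by
    intro t
    by_cases h1 : t < a <;> by_cases h2 : t < b <;>
      simp [Set.indicator_apply, Set.mem_Ico, h1, h2, not_le.mpr, not_lt.mp,
        ENNReal.ofReal_eq_zero]
  rw [lintegral_congr h, lintegral_indicator measurableSet_Ico, setLIntegral_one,
    Real.volume_Ico, ofReal_max_zero]

lemma gp_int (F : Finset X → ℝ) (x : X) (ω : Finset X) :
    ∫⁻ t : ℝ, gp F (t, x, ω) = ENNReal.ofReal (Dp F x ω) := by
  rw [Dp_eq', ← ofReal_max_zero]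
  simpa [gp, chi] using key (F ω) (F (flipc x ω))

lemma gm_int (F : Finset X → ℝ) (x : X) (ω : Finset X) :
    ∫⁻ t : ℝ, gm F (t, x, ω) = ENNReal.ofReal (Dm F x ω) := by
  rw [Dm_eq', ← ofReal_max_zero]
  simpa [gm, chi] using key (F (flipc x ω)) (F ω)

/-- Tonelli: push the `t`-integral outside. -/
lemma swap3 (σ : Measure X) [SFinite σ] (π : Measure (Finset X)) [SFinite π]
    {h : ℝ × X × Finset X → ℝ≥0∞} (hh : Measurable h) :
    ∫⁻ ω, ∫⁻ x, (∫⁻ t : ℝ, h (t, x, ω)) ∂σ ∂π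
      = ∫⁻ t : ℝ, ∫⁻ ω, ∫⁻ x, h (t, x, ω) ∂σ ∂π := by
  have step1 : ∀ ω : Finset X,
      ∫⁻ x, (∫⁻ t : ℝ, h (t, x, ω)) ∂σ = ∫⁻ t : ℝ, ∫⁻ x, h (t, x, ω) ∂σ := by
    intro ω
    refine lintegral_lintegral_swap ?_
    exact (hh.comp ((measurable_snd.prodMk
      (measurable_fst.prodMk measurable_const)) :
        Measurable fun p : X × ℝ => (p.2, p.1, ω))).aemeasurable
  calc ∫⁻ ω, ∫⁻ x, (∫⁻ t : ℝ, h (t, x, ω)) ∂σ ∂π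
      = ∫⁻ ω, (∫⁻ t : ℝ, ∫⁻ x, h (t, x, ω) ∂σ) ∂π := lintegral_congr step1
    _ = ∫⁻ t : ℝ, ∫⁻ ω, ∫⁻ x, h (t, x, ω) ∂σ ∂π := by
        refine lintegral_lintegral_swap ?_
        refine Measurable.aemeasurable ?_
        exact Measurable.lintegral_prod_right'
          (f := fun q : (Finset X × ℝ) × X => h (q.1.2, q.2, q.1.1))
          (hh.comp ((measurable_fst.snd.prodMk
            (measurable_snd.prodMk measurable_fst.fst))))

set_option maxHeartbeats 1000000 in
/-- Lemma 4.2, `L¹` co-area formula. -/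
theorem coarea_L1
    [MetricSpace X] [BorelSpace X]
    (σ : Measure X) [IsFiniteMeasure σ] [NullSingletonClass σ]
    (π : Measure (Finset X)) (hπ : IsPoisson σ π)
    (F : Finset X → ℝ) (hF : Measurable F) :
    (∫⁻ ω, ∫⁻ x, ENNReal.ofReal (Dp F x ω) ∂σ ∂π
      = ∫⁻ t : ℝ, ∫⁻ ω, ∫⁻ x, ENNReal.ofReal (Dp (ind {ω' | t < F ω'}) x ω) ∂σ ∂π) ∧
    (∫⁻ ω, ∫⁻ x, ENNReal.ofReal (Dm F x ω) ∂σ ∂π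
      = ∫⁻ t : ℝ, ∫⁻ ω, ∫⁻ x, ENNReal.ofReal (Dm (ind {ω' | t < F ω'}) x ω) ∂σ ∂π) ∧
    (∫⁻ ω, ∑ x ∈ ω, ENNReal.ofReal (Dp F x ω) ∂π
      = ∫⁻ t : ℝ, ∫⁻ ω, ∑ x ∈ ω, ENNReal.ofReal (Dp (ind {ω' | t < F ω'}) x ω) ∂π) ∧
    (∫⁻ ω, ∑ x ∈ ω, ENNReal.ofReal (Dm F x ω) ∂π
      = ∫⁻ t : ℝ, ∫⁻ ω, ∑ x ∈ ω, ENNReal.ofReal (Dm (ind {ω' | t < F ω'}) x ω) ∂π) ∧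
    (∫⁻ ω, ∫⁻ x, ENNReal.ofReal |D F x ω| ∂((2 : ℝ≥0∞)⁻¹ • (σ + pt ω)) ∂π
      = ∫⁻ t : ℝ, ∫⁻ ω, ∫⁻ x, ENNReal.ofReal |D (ind {ω' | t < F ω'}) x ω|
          ∂((2 : ℝ≥0∞)⁻¹ • (σ + pt ω)) ∂π) := by
  obtain ⟨hGA, hprob, mecke⟩ := hπ
  haveI := hprob
  -- measurability of the level indicators
  have hind : ∀ t : ℝ, Measurable (ind {ω' | t < F ω'} : Finset X → ℝ) := fun t =>
    Measurable.indicator measurable_const (hF measurableSet_Ioi)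
  -- Mecke transfer lemmas
  have mecke_p : ∀ G : Finset X → ℝ, Measurable G →
      ∫⁻ ω, ∑ x ∈ ω, ENNReal.ofReal (Dp G x ω) ∂π
        = ∫⁻ ω, ∫⁻ x, ENNReal.ofReal (Dm G x ω) ∂σ ∂π := by
    intro G hG
    rw [mecke (fun x ω => ENNReal.ofReal (Dp G x ω)) (Dp_meas hGA hG)]
    refine lintegral_congr fun ω => lintegral_congr_ae ?_
    have hω : σ (↑ω : Set X) = 0 := Set.Countable.measure_zero ω.countable_toSet σ
    filter_upwards [measure_eq_zero_iff_ae_notMem.1 hω] with x hx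
    have hx' : x ∉ ω := by simpa using hx
    have h1 : flipc x (insert x ω) = ω := by
      simp [flipc, Finset.erase_insert hx']
    have h2 : flipc x ω = insert x ω := by simp [flipc, hx']
    rw [Dp_eq', Dm_eq', h1, h2]
  have mecke_m : ∀ G : Finset X → ℝ, Measurable G →
      ∫⁻ ω, ∑ x ∈ ω, ENNReal.ofReal (Dm G x ω) ∂π
        = ∫⁻ ω, ∫⁻ x, ENNReal.ofReal (Dp G x ω) ∂σ ∂π := by
    intro G hG
    rw [mecke (fun x ω => ENNReal.ofReal (Dm G x ω)) (Dm_meas hGA hG)]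
    refine lintegral_congr fun ω => lintegral_congr_ae ?_
    have hω : σ (↑ω : Set X) = 0 := Set.Countable.measure_zero ω.countable_toSet σ
    filter_upwards [measure_eq_zero_iff_ae_notMem.1 hω] with x hx
    have hx' : x ∉ ω := by simpa using hx
    have h1 : flipc x (insert x ω) = ω := by
      simp [flipc, Finset.erase_insert hx']
    have h2 : flipc x ω = insert x ω := by simp [flipc, hx']
    rw [Dm_eq', Dp_eq', h1, h2]
  have mecke_abs : ∀ G : Finset X → ℝ, Measurable G →
      ∫⁻ ω, ∑ x ∈ ω, ENNReal.ofReal |D G x ω| ∂π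
        = ∫⁻ ω, ∫⁻ x, ENNReal.ofReal |D G x ω| ∂σ ∂π := by
    intro G hG
    rw [mecke (fun x ω => ENNReal.ofReal |D G x ω|) (absD_meas hGA hG)]
    refine lintegral_congr fun ω => lintegral_congr_ae ?_
    have hω : σ (↑ω : Set X) = 0 := Set.Countable.measure_zero ω.countable_toSet σ
    filter_upwards [measure_eq_zero_iff_ae_notMem.1 hω] with x hx
    have hx' : x ∉ ω := by simpa using hx
    have h1 : flipc x (insert x ω) = ω := by
      simp [flipc, Finset.erase_insert hx']
    have h2 : flipc x ω = insert x ω := by simp [flipc, hx']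
    rw [D_eq_flipc, D_eq_flipc, h1, h2, abs_sub_comm]
  -- Part 1
  have part1 : ∫⁻ ω, ∫⁻ x, ENNReal.ofReal (Dp F x ω) ∂σ ∂π
      = ∫⁻ t : ℝ, ∫⁻ ω, ∫⁻ x, ENNReal.ofReal (Dp (ind {ω' | t < F ω'}) x ω) ∂σ ∂π := by
    calc ∫⁻ ω, ∫⁻ x, ENNReal.ofReal (Dp F x ω) ∂σ ∂π
        = ∫⁻ ω, ∫⁻ x, (∫⁻ t : ℝ, gp F (t, x, ω)) ∂σ ∂π :=
          lintegral_congr fun ω => lintegral_congr fun x => (gp_int F x ω).symm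
      _ = ∫⁻ t : ℝ, ∫⁻ ω, ∫⁻ x, gp F (t, x, ω) ∂σ ∂π := swap3 σ π (gp_meas hGA hF)
      _ = _ := lintegral_congr fun t => lintegral_congr fun ω =>
          lintegral_congr fun x => gp_eq F t x ω
  -- Part 2
  have part2 : ∫⁻ ω, ∫⁻ x, ENNReal.ofReal (Dm F x ω) ∂σ ∂π
      = ∫⁻ t : ℝ, ∫⁻ ω, ∫⁻ x, ENNReal.ofReal (Dm (ind {ω' | t < F ω'}) x ω) ∂σ ∂π := by
    calc ∫⁻ ω, ∫⁻ x, ENNReal.ofReal (Dm F x ω) ∂σ ∂π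
        = ∫⁻ ω, ∫⁻ x, (∫⁻ t : ℝ, gm F (t, x, ω)) ∂σ ∂π :=
          lintegral_congr fun ω => lintegral_congr fun x => (gm_int F x ω).symm
      _ = ∫⁻ t : ℝ, ∫⁻ ω, ∫⁻ x, gm F (t, x, ω) ∂σ ∂π := swap3 σ π (gm_meas hGA hF)
      _ = _ := lintegral_congr fun t => lintegral_congr fun ω =>
          lintegral_congr fun x => gm_eq F t x ω
  -- Part 3
  have part3 : ∫⁻ ω, ∑ x ∈ ω, ENNReal.ofReal (Dp F x ω) ∂π
      = ∫⁻ t : ℝ, ∫⁻ ω, ∑ x ∈ ω, ENNReal.ofReal (Dp (ind {ω' | t < F ω'}) x ω) ∂π := by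
    rw [mecke_p F hF, part2]
    exact lintegral_congr fun t => (mecke_p _ (hind t)).symm
  -- Part 4
  have part4 : ∫⁻ ω, ∑ x ∈ ω, ENNReal.ofReal (Dm F x ω) ∂π
      = ∫⁻ t : ℝ, ∫⁻ ω, ∑ x ∈ ω, ENNReal.ofReal (Dm (ind {ω' | t < F ω'}) x ω) ∂π := by
    rw [mecke_m F hF, part1]
    exact lintegral_congr fun t => (mecke_m _ (hind t)).symm
  -- Part 5
  -- measurability of the σ-integrals in ω
  have measDp : ∀ G : Finset X → ℝ, Measurable G →
      Measurable fun ω => ∫⁻ x, ENNReal.ofReal (Dp G x ω) ∂σ := fun G hG =>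
    Measurable.lintegral_prod_right'
      (f := fun q : Finset X × X => ENNReal.ofReal (Dp G q.2 q.1))
      ((Dp_meas hGA hG).comp (measurable_snd.prodMk measurable_fst))
  have measDm : ∀ G : Finset X → ℝ, Measurable G →
      Measurable fun ω => ∫⁻ x, ENNReal.ofReal (Dm G x ω) ∂σ := fun G hG =>
    Measurable.lintegral_prod_right'
      (f := fun q : Finset X × X => ENNReal.ofReal (Dm G q.2 q.1))
      ((Dm_meas hGA hG).comp (measurable_snd.prodMk measurable_fst))
  have habs_sigma : ∀ G : Finset X → ℝ, Measurable G →
      ∫⁻ ω, ∫⁻ x, ENNReal.ofReal |D G x ω| ∂σ ∂π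
        = (∫⁻ ω, ∫⁻ x, ENNReal.ofReal (Dp G x ω) ∂σ ∂π)
            + ∫⁻ ω, ∫⁻ x, ENNReal.ofReal (Dm G x ω) ∂σ ∂π := by
    intro G hG
    calc ∫⁻ ω, ∫⁻ x, ENNReal.ofReal |D G x ω| ∂σ ∂π
        = ∫⁻ ω, ((∫⁻ x, ENNReal.ofReal (Dp G x ω) ∂σ)
            + ∫⁻ x, ENNReal.ofReal (Dm G x ω) ∂σ) ∂π := by
          refine lintegral_congr fun ω => ?_
          have hxm : Measurable fun x => ENNReal.ofReal (Dp G x ω) :=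
            (Dp_meas hGA hG).comp (measurable_id.prodMk measurable_const)
          rw [← lintegral_add_left hxm]
          exact lintegral_congr fun x => abs_D_split G x ω
      _ = _ := lintegral_add_left (measDp G hG) _
  have main_abs : ∀ G : Finset X → ℝ, Measurable G →
      ∫⁻ ω, ∫⁻ x, ENNReal.ofReal |D G x ω| ∂((2 : ℝ≥0∞)⁻¹ • (σ + pt ω)) ∂π
        = (∫⁻ ω, ∫⁻ x, ENNReal.ofReal (Dp G x ω) ∂σ ∂π)
            + ∫⁻ ω, ∫⁻ x, ENNReal.ofReal (Dm G x ω) ∂σ ∂π := by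
    intro G hG
    have measabs : Measurable fun ω => ∫⁻ x, ENNReal.ofReal |D G x ω| ∂σ :=
      Measurable.lintegral_prod_right'
        (f := fun q : Finset X × X => ENNReal.ofReal |D G q.2 q.1|)
        ((absD_meas hGA hG).comp (measurable_snd.prodMk measurable_fst))
    calc ∫⁻ ω, ∫⁻ x, ENNReal.ofReal |D G x ω| ∂((2 : ℝ≥0∞)⁻¹ • (σ + pt ω)) ∂π
        = ∫⁻ ω, (2 : ℝ≥0∞)⁻¹ * ((∫⁻ x, ENNReal.ofReal |D G x ω| ∂σ)
            + ∑ x ∈ ω, ENNReal.ofReal |D G x ω|) ∂π := by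
          refine lintegral_congr fun ω => ?_
          have hx : Measurable fun x => ENNReal.ofReal |D G x ω| :=
            (absD_meas hGA hG).comp (measurable_id.prodMk measurable_const)
          rw [lintegral_smul_measure, lintegral_add_measure, pt,
            lintegral_finset_sum_measure]
          congr 2
          exact Finset.sum_congr rfl fun x _ => lintegral_dirac' x hx
      _ = (2 : ℝ≥0∞)⁻¹ * ∫⁻ ω, ((∫⁻ x, ENNReal.ofReal |D G x ω| ∂σ)
            + ∑ x ∈ ω, ENNReal.ofReal |D G x ω|) ∂π :=
          lintegral_const_mul' _ _ (by simp)
      _ = (2 : ℝ≥0∞)⁻¹ * ((∫⁻ ω, ∫⁻ x, ENNReal.ofReal |D G x ω| ∂σ ∂π)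
            + ∫⁻ ω, ∑ x ∈ ω, ENNReal.ofReal |D G x ω| ∂π) := by
          rw [lintegral_add_left measabs]
      _ = (2 : ℝ≥0∞)⁻¹ * ((∫⁻ ω, ∫⁻ x, ENNReal.ofReal |D G x ω| ∂σ ∂π)
            + ∫⁻ ω, ∫⁻ x, ENNReal.ofReal |D G x ω| ∂σ ∂π) := by
          rw [mecke_abs G hG]
      _ = ∫⁻ ω, ∫⁻ x, ENNReal.ofReal |D G x ω| ∂σ ∂π := by
          rw [← two_mul, ← mul_assoc,
            ENNReal.inv_mul_cancel two_ne_zero ENNReal.ofNat_ne_top, one_mul]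
      _ = _ := habs_sigma G hG
  -- measurability in t of the iterated integrals
  have mR1 : Measurable fun t : ℝ => ∫⁻ ω, ∫⁻ x, gp F (t, x, ω) ∂σ ∂π := by
    apply Measurable.lintegral_prod_right'
      (f := fun q : ℝ × Finset X => ∫⁻ x, gp F (q.1, x, q.2) ∂σ)
    apply Measurable.lintegral_prod_right'
      (f := fun q : (ℝ × Finset X) × X => gp F (q.1.1, q.2, q.1.2))
    exact (gp_meas hGA hF).comp
      (measurable_fst.fst.prodMk (measurable_snd.prodMk measurable_fst.snd))
  have part5 : ∫⁻ ω, ∫⁻ x, ENNReal.ofReal |D F x ω| ∂((2 : ℝ≥0∞)⁻¹ • (σ + pt ω)) ∂π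
      = ∫⁻ t : ℝ, ∫⁻ ω, ∫⁻ x, ENNReal.ofReal |D (ind {ω' | t < F ω'}) x ω|
          ∂((2 : ℝ≥0∞)⁻¹ • (σ + pt ω)) ∂π := by
    have hR1 : (fun t : ℝ => ∫⁻ ω, ∫⁻ x,
        ENNReal.ofReal (Dp (ind {ω' | t < F ω'}) x ω) ∂σ ∂π)
        = fun t : ℝ => ∫⁻ ω, ∫⁻ x, gp F (t, x, ω) ∂σ ∂π :=
      funext fun t => lintegral_congr fun ω => lintegral_congr fun x => (gp_eq F t x ω).symm
    calc ∫⁻ ω, ∫⁻ x, ENNReal.ofReal |D F x ω| ∂((2 : ℝ≥0∞)⁻¹ • (σ + pt ω)) ∂π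
        = (∫⁻ ω, ∫⁻ x, ENNReal.ofReal (Dp F x ω) ∂σ ∂π)
            + ∫⁻ ω, ∫⁻ x, ENNReal.ofReal (Dm F x ω) ∂σ ∂π := main_abs F hF
      _ = (∫⁻ t : ℝ, ∫⁻ ω, ∫⁻ x, ENNReal.ofReal (Dp (ind {ω' | t < F ω'}) x ω) ∂σ ∂π)
            + ∫⁻ t : ℝ, ∫⁻ ω, ∫⁻ x,
                ENNReal.ofReal (Dm (ind {ω' | t < F ω'}) x ω) ∂σ ∂π := by
          rw [part1, part2]
      _ = ∫⁻ t : ℝ, ((∫⁻ ω, ∫⁻ x, ENNReal.ofReal (Dp (ind {ω' | t < F ω'}) x ω) ∂σ ∂π)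
            + ∫⁻ ω, ∫⁻ x, ENNReal.ofReal (Dm (ind {ω' | t < F ω'}) x ω) ∂σ ∂π) := by
          rw [hR1, ← lintegral_add_left mR1]
          exact lintegral_congr fun a => by rw [congrFun hR1 a]
      _ = _ := lintegral_congr fun t => (main_abs _ (hind t)).symm
  exact ⟨part1, part2, part3, part4, part5⟩

end ConfigSpace
end
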